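/- For any q ∈ (0,1], p ∈ [0,1], and integer n ≥ 1, the combinatorial identity q · Σ_{k=0}^{n-1} [C(n-1,k) p^k (1-p)^{n-1-k} · Σ_{t=0}^{k} C(k,t) q^t (1-q)^{k-t} / (t+1)] = (1 - (1 - q p)^n) / (n p) holds (for p > 0). -/
import Mathlib

lemma lemD (m : ℕ) (x y : ℝ) :
    ∑ k ∈ Finset.range (m + 1), (((m + 1).choose (k + 1) : ℝ)) * x ^ (k + 1) * y ^ (m - k)
      = (x + y) ^ (m + 1) - y ^ (m + 1) := by
  have h := add_pow x y (m + 1)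
  rw [Finset.sum_range_succ'] at h
  simp only [Nat.succ_sub_succ, pow_zero, Nat.sub_zero, Nat.choose_zero_right, Nat.cast_one,
    one_mul, mul_one] at h
  rw [h, add_sub_cancel_right]
  exact Finset.sum_congr rfl (fun k _ => by ring)

lemma lemC (k : ℕ) (q : ℝ) :
    q * ∑ t ∈ Finset.range (k + 1), ((k.choose t : ℝ) * q ^ t * (1 - q) ^ (k - t) / (t + 1))
      = (1 - (1 - q) ^ (k + 1)) / (k + 1) := by
  have hD := lemD k q (1 - q)
  rw [show q + (1 - q) = 1 by ring, one_pow] at hD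
  rw [Finset.mul_sum]
  have hstep : ∀ t ∈ Finset.range (k + 1),
      q * ((k.choose t : ℝ) * q ^ t * (1 - q) ^ (k - t) / (t + 1))
        = ((k + 1).choose (t + 1) : ℝ) * q ^ (t + 1) * (1 - q) ^ (k - t) / (k + 1) := by
    intro t _
    have hc : ((k : ℝ) + 1) * (k.choose t : ℝ) = ((k + 1).choose (t + 1) : ℝ) * ((t : ℝ) + 1) := by
      exact_mod_cast Nat.add_one_mul_choose_eq k t
    have ht : ((t : ℝ) + 1) ≠ 0 := Nat.cast_add_one_ne_zero t
    have hk : ((k : ℝ) + 1) ≠ 0 := Nat.cast_add_one_ne_zero k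
    have hdiv : ((k.choose t : ℝ)) / ((t : ℝ) + 1) = ((k + 1).choose (t + 1) : ℝ) / ((k : ℝ) + 1) := by
      rw [div_eq_div_iff ht hk]; linarith [hc]
    calc q * ((k.choose t : ℝ) * q ^ t * (1 - q) ^ (k - t) / (t + 1))
        = ((k.choose t : ℝ) / ((t : ℝ) + 1)) * (q ^ (t + 1) * (1 - q) ^ (k - t)) := by
          rw [pow_succ]; ring
      _ = (((k + 1).choose (t + 1) : ℝ) / ((k : ℝ) + 1)) * (q ^ (t + 1) * (1 - q) ^ (k - t)) := by
          rw [hdiv]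
      _ = ((k + 1).choose (t + 1) : ℝ) * q ^ (t + 1) * (1 - q) ^ (k - t) / (k + 1) := by ring
  rw [Finset.sum_congr rfl hstep, ← Finset.sum_div, hD]

theorem stmt_0 (q p : ℝ) (n : ℕ) (hq0 : 0 < q) (hq1 : q ≤ 1)
    (hp0 : 0 < p) (hp1 : p ≤ 1) (hn : 1 ≤ n) :
    q * ∑ k ∈ Finset.range n, (((n - 1).choose k : ℝ) * p ^ k * (1 - p) ^ (n - 1 - k) *
        ∑ t ∈ Finset.range (k + 1), ((k.choose t : ℝ) * q ^ t * (1 - q) ^ (k - t) / (t + 1)))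
      = (1 - (1 - q * p) ^ n) / (n * p) := by
  obtain ⟨m, rfl⟩ : ∃ m, n = m + 1 := ⟨n - 1, (Nat.succ_pred_eq_of_pos hn).symm⟩
  simp only [Nat.add_sub_cancel]
  push_cast
  rw [Finset.mul_sum]
  have hp : p ≠ 0 := ne_of_gt hp0
  have step1 : ∀ k ∈ Finset.range (m + 1),
      q * ((m.choose k : ℝ) * p ^ k * (1 - p) ^ (m - k) *
        ∑ t ∈ Finset.range (k + 1), ((k.choose t : ℝ) * q ^ t * (1 - q) ^ (k - t) / (t + 1)))
      = (((m + 1).choose (k + 1) : ℝ) * p ^ (k + 1) * (1 - p) ^ (m - k)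
          - ((m + 1).choose (k + 1) : ℝ) * (p * (1 - q)) ^ (k + 1) * (1 - p) ^ (m - k))
          / ((m + 1) * p) := by
    intro k _
    have hC := lemC k q
    have hc : ((m : ℝ) + 1) * (m.choose k : ℝ) = ((m + 1).choose (k + 1) : ℝ) * ((k : ℝ) + 1) := by
      exact_mod_cast Nat.add_one_mul_choose_eq m k
    have hk : ((k : ℝ) + 1) ≠ 0 := Nat.cast_add_one_ne_zero k
    have hm : ((m : ℝ) + 1) ≠ 0 := Nat.cast_add_one_ne_zero m
    have hdiv : ((m.choose k : ℝ)) / ((k : ℝ) + 1) = ((m + 1).choose (k + 1) : ℝ) / ((m : ℝ) + 1) := by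
      rw [div_eq_div_iff hk hm]; linarith [hc]
    calc q * ((m.choose k : ℝ) * p ^ k * (1 - p) ^ (m - k) *
        ∑ t ∈ Finset.range (k + 1), ((k.choose t : ℝ) * q ^ t * (1 - q) ^ (k - t) / (t + 1)))
        = (m.choose k : ℝ) * p ^ k * (1 - p) ^ (m - k) *
          (q * ∑ t ∈ Finset.range (k + 1), ((k.choose t : ℝ) * q ^ t * (1 - q) ^ (k - t) / (t + 1))) := by
          ring
      _ = (m.choose k : ℝ) * p ^ k * (1 - p) ^ (m - k) * ((1 - (1 - q) ^ (k + 1)) / (k + 1)) := by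
          rw [hC]
      _ = ((m.choose k : ℝ) / ((k : ℝ) + 1)) * (p ^ k * (1 - p) ^ (m - k) * (1 - (1 - q) ^ (k + 1))) := by
          ring
      _ = (((m + 1).choose (k + 1) : ℝ) / ((m : ℝ) + 1)) *
            (p ^ k * (1 - p) ^ (m - k) * (1 - (1 - q) ^ (k + 1))) := by rw [hdiv]
      _ = (((m + 1).choose (k + 1) : ℝ) * p ^ (k + 1) * (1 - p) ^ (m - k)
          - ((m + 1).choose (k + 1) : ℝ) * (p * (1 - q)) ^ (k + 1) * (1 - p) ^ (m - k))
          / ((m + 1) * p) := by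
          rw [pow_succ, mul_pow, pow_succ]
          field_simp
          ring
  rw [Finset.sum_congr rfl step1, ← Finset.sum_div, Finset.sum_sub_distrib]
  have h1 := lemD m p (1 - p)
  have h2 := lemD m (p * (1 - q)) (1 - p)
  rw [show p + (1 - p) = 1 by ring, one_pow] at h1
  rw [show p * (1 - q) + (1 - p) = 1 - q * p by ring] at h2
  rw [h1, h2]
  ring
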